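/- Fix a > 0 and an integer j ≥ 0. Let S ⊆ ℤ be a finite set and let b : ℤ → ℝ satisfy |b_k| ≤ 1 for all k. Define θ = Σ_{k∈S} b_k (f_ε ⋆ ψ_{jk}), where f_ε is the uniform density on [−a,a]. Then ∫_ℝ |θ^*(ξ)|² dξ ≤ 6π c_ψ² |S| min( 1, (a 2^j)^{−2} ). -/

import Mathlib

open MeasureTheory Real


lemma exp_int_interval (m : ℤ) (t0 : ℝ) :
    (∫ t in t0..(t0 + 2*π), Complex.exp (Complex.I * m * t))
      = if m = 0 then (2*π : ℂ) else 0 := by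
  rcases eq_or_ne m 0 with hm | hm
  · simp [hm, mul_comm]
  · have hc : (Complex.I * m) ≠ 0 := by
      simp [Complex.I_ne_zero, Complex.ext_iff, hm]
    rw [if_neg hm]
    have : (∫ t in t0..(t0 + 2*π), Complex.exp (Complex.I * m * t))
        = ∫ t in t0..(t0 + 2*π), Complex.exp ((Complex.I * m) * t) := by
      norm_num [mul_assoc]
    rw [this, integral_exp_mul_complex hc]
    have h1 : Complex.I * m * (t0 + 2*π : ℝ) = Complex.I * m * t0 + m * (2*π*Complex.I) := by
      push_cast; ring
    rw [h1, Complex.exp_add, Complex.exp_int_mul_two_pi_mul_I, mul_one, sub_self, zero_div]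

set_option maxHeartbeats 1000000 in
lemma orth (S : Finset ℤ) (b : ℤ → ℝ) (t0 : ℝ) :
    (∫ t in t0..(t0 + 2*π), ‖∑ k ∈ S, (b k : ℂ) * Complex.exp (Complex.I * k * t)‖^2)
      = 2*π*∑ k ∈ S, (b k)^2 := by
  have h1 : ∀ t : ℝ, ((‖∑ k ∈ S, (b k : ℂ) * Complex.exp (Complex.I * k * t)‖^2 : ℝ) : ℂ)
      = ∑ k ∈ S, ∑ l ∈ S, (b k : ℂ) * (b l) * Complex.exp (Complex.I * ((k : ℝ) - l) * t) := by
    intro t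
    set z := ∑ k ∈ S, (b k : ℂ) * Complex.exp (Complex.I * k * t) with hz
    have : ((‖z‖^2 : ℝ) : ℂ) = z * (starRingEnd ℂ) z := by
      rw [Complex.mul_conj]
      norm_cast
      exact (Complex.sq_norm z)
    rw [this, hz, map_sum, Finset.sum_mul_sum]
    refine Finset.sum_congr rfl fun k _ => Finset.sum_congr rfl fun l _ => ?_
    rw [map_mul, Complex.conj_ofReal, ← Complex.exp_conj]
    rw [show (starRingEnd ℂ) (Complex.I * l * t) = -(Complex.I * l * t) by
      simp [Complex.ext_iff]]
    rw [mul_mul_mul_comm, ← Complex.exp_add]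
    congr 1
    push_cast; ring
  have hcont : ∀ (k l : ℤ), Continuous (fun t : ℝ =>
      (b k : ℂ) * (b l) * Complex.exp (Complex.I * ((k : ℝ) - l) * t)) :=
    fun k l => continuous_const.mul (Complex.continuous_exp.comp
      (continuous_const.mul Complex.continuous_ofReal))
  have hI1 : (∫ t in t0..(t0 + 2*π), ∑ k ∈ S, ∑ l ∈ S,
        (b k : ℂ) * (b l) * Complex.exp (Complex.I * ((k : ℝ) - l) * t))
      = ∑ k ∈ S, ∫ t in t0..(t0 + 2*π), ∑ l ∈ S,
        (b k : ℂ) * (b l) * Complex.exp (Complex.I * ((k : ℝ) - l) * t) := by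
    refine intervalIntegral.integral_finset_sum fun k _ => ?_
    have h := IntervalIntegrable.sum (μ := volume) (a := t0) (b := t0 + 2*π) S
      (f := fun (l : ℤ) (t : ℝ) => (b k : ℂ) * (b l) * Complex.exp (Complex.I * ((k : ℝ) - l) * t))
      (fun l _ => (hcont k l).intervalIntegrable (μ := volume) _ _)
    have h2 : (∑ l ∈ S, fun t : ℝ => (b k : ℂ) * (b l) * Complex.exp (Complex.I * ((k : ℝ) - l) * t))
        = fun t : ℝ => ∑ l ∈ S, (b k : ℂ) * (b l) * Complex.exp (Complex.I * ((k : ℝ) - l) * t) := by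
      ext t; simp
    exact h2 ▸ h
  have hI2 : ∀ k : ℤ, (∫ t in t0..(t0 + 2*π), ∑ l ∈ S,
        (b k : ℂ) * (b l) * Complex.exp (Complex.I * ((k : ℝ) - l) * t))
      = ∑ l ∈ S, ∫ t in t0..(t0 + 2*π),
        (b k : ℂ) * (b l) * Complex.exp (Complex.I * ((k : ℝ) - l) * t) :=
    fun k => intervalIntegral.integral_finset_sum
      (fun l _ => ((hcont k l).intervalIntegrable (μ := volume) _ _))
  have key : ((∫ t in t0..(t0 + 2*π),
      ‖∑ k ∈ S, (b k : ℂ) * Complex.exp (Complex.I * k * t)‖^2 : ℝ) : ℂ)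
      = ((2*π*∑ k ∈ S, (b k)^2 : ℝ) : ℂ) := by
    rw [← intervalIntegral.integral_ofReal]
    rw [intervalIntegral.integral_congr (g := fun t => ∑ k ∈ S, ∑ l ∈ S,
        (b k : ℂ) * (b l) * Complex.exp (Complex.I * ((k : ℝ) - l) * t))
      (fun t _ => h1 t)]
    rw [hI1]
    have : ∀ k ∈ S, (∫ t in t0..(t0 + 2*π), ∑ l ∈ S,
        (b k : ℂ) * (b l) * Complex.exp (Complex.I * ((k : ℝ) - l) * t))
        = ((b k : ℂ))^2 * (2*π) := by
      intro k hk
      rw [hI2 k]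
      rw [Finset.sum_eq_single_of_mem k hk]
      · rw [intervalIntegral.integral_const_mul]
        have : (∫ t in t0..(t0 + 2*π), Complex.exp (Complex.I * ((k : ℝ) - k) * t))
            = ∫ t in t0..(t0 + 2*π), Complex.exp (Complex.I * ((0 : ℤ)) * t) := by
          norm_num
        rw [this, exp_int_interval, if_pos rfl]
        ring
      · intro l hl hlk
        rw [intervalIntegral.integral_const_mul]
        have : (∫ t in t0..(t0 + 2*π), Complex.exp (Complex.I * ((k : ℝ) - l) * t))
            = ∫ t in t0..(t0 + 2*π), Complex.exp (Complex.I * ((k - l : ℤ)) * t) := by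
          refine intervalIntegral.integral_congr fun t _ => ?_
          congr 1; push_cast; ring
        rw [this, exp_int_interval, if_neg (sub_ne_zero.2 hlk.symm)]
        ring
    rw [Finset.sum_congr rfl this, ← Finset.sum_mul, mul_comm]
    push_cast
    ring_nf
  exact_mod_cast key


lemma normexp (x ξ : ℝ) : ‖Complex.exp (Complex.I * x * ξ)‖ = 1 := by
  rw [Complex.norm_exp]
  simp

lemma ff_one (a : ℝ) (ha : 0 < a) (ξ : ℝ) :
    ‖∫ x : ℝ, Complex.exp (Complex.I * x * ξ) *
      ((Set.indicator (Set.Icc (-a) a) (fun _ => 1/(2*a)) x : ℝ) : ℂ)‖ ≤ 1 := by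
  refine (norm_integral_le_integral_norm _).trans ?_
  have : ∀ x : ℝ, ‖Complex.exp (Complex.I * x * ξ) *
      ((Set.indicator (Set.Icc (-a) a) (fun _ => 1/(2*a)) x : ℝ) : ℂ)‖
      = Set.indicator (Set.Icc (-a) a) (fun _ => 1/(2*a)) x := by
    intro x
    rw [norm_mul, normexp, one_mul, Complex.norm_real, Real.norm_eq_abs,
      abs_of_nonneg (Set.indicator_nonneg (fun _ _ => by positivity) x)]
  rw [integral_congr_ae (Filter.Eventually.of_forall this),
    integral_indicator_const _ measurableSet_Icc]
  simp only [Real.volume_Icc, smul_eq_mul]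
  rw [Real.volume_real_Icc_of_le (by linarith)]
  rw [show a - -a = 2*a by ring]
  rw [mul_one_div, div_self (by positivity)]

lemma ff_inv (a : ℝ) (ha : 0 < a) (ξ : ℝ) (hξ : ξ ≠ 0) :
    ‖∫ x : ℝ, Complex.exp (Complex.I * x * ξ) *
      ((Set.indicator (Set.Icc (-a) a) (fun _ => 1/(2*a)) x : ℝ) : ℂ)‖ ≤ 1/(a*|ξ|) := by
  have hc : (Complex.I * ξ) ≠ 0 := by simp [Complex.I_ne_zero, Complex.ext_iff, hξ]
  have h1 : (∫ x : ℝ, Complex.exp (Complex.I * x * ξ) *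
      ((Set.indicator (Set.Icc (-a) a) (fun _ => 1/(2*a)) x : ℝ) : ℂ))
      = ∫ x : ℝ, (Set.Icc (-a) a).indicator
          (fun x : ℝ => Complex.exp (Complex.I * x * ξ) * ((1/(2*a) : ℝ) : ℂ)) x := by
    refine integral_congr_ae (Filter.Eventually.of_forall fun x => ?_)
    by_cases hx : x ∈ Set.Icc (-a) a
    · simp [Set.indicator_of_mem hx]
    · simp [Set.indicator_of_notMem hx]
  rw [h1, integral_indicator measurableSet_Icc,
    MeasureTheory.integral_Icc_eq_integral_Ioc,
    ← intervalIntegral.integral_of_le (by linarith : -a ≤ a),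
    intervalIntegral.integral_mul_const]
  have h2 : (∫ x in (-a)..a, Complex.exp (Complex.I * x * ξ))
      = ∫ x in (-a)..a, Complex.exp ((Complex.I * ξ) * x) := by
    refine intervalIntegral.integral_congr fun t _ => ?_
    ring_nf
  rw [h2, integral_exp_mul_complex hc]
  rw [norm_mul, norm_div]
  have hea : ‖Complex.exp (Complex.I * ξ * a) - Complex.exp (Complex.I * ξ * (-a))‖ ≤ 2 := by
    refine (norm_sub_le _ _).trans ?_
    have e1 : ‖Complex.exp (Complex.I * ξ * (a:ℝ))‖ = 1 := by
      rw [Complex.norm_exp]; simp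
    have e2 : ‖Complex.exp (Complex.I * ξ * ((-a:ℝ)))‖ = 1 := by
      rw [Complex.norm_exp]; simp
    push_cast at e1 e2 ⊢
    rw [e1, e2]; norm_num
  have hnc : ‖Complex.I * (ξ:ℂ)‖ = |ξ| := by
    rw [norm_mul, Complex.norm_I, one_mul, Complex.norm_real, Real.norm_eq_abs]
  have hnr : ‖1/(2*(a:ℂ))‖ = 1/(2*a) := by
    rw [norm_div, norm_one, norm_mul]
    simp [abs_of_pos ha]
  push_cast at hea hnc ⊢
  rw [hnc, hnr]
  have h0 : 0 < |ξ| := abs_pos.2 hξ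
  calc ‖Complex.exp (Complex.I * ξ * a) - Complex.exp (Complex.I * ξ * (-a))‖ / |ξ| * (1/(2*a))
      ≤ 2 / |ξ| * (1/(2*a)) := by
        gcongr
    _ = 1/(a*|ξ|) := by field_simp

set_option maxHeartbeats 1200000 in
/-- For `a > 0`, `j ∈ ℕ`, a finite `S ⊆ ℤ` and coefficients `|b_k| ≤ 1`, the function
`θ = Σ_{k∈S} b_k (f_ε ⋆ ψ_{jk})` (with `f_ε` the uniform density on `[−a,a]` and `ψ` a
Meyer-type wavelet) satisfies `∫ |θ^*(ξ)|² dξ ≤ 6π c_ψ² |S| min(1, (a2^j)⁻²)`. -/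
theorem stmt_18 (a cψ : ℝ) (ha : 0 < a) (hcψ : 0 < cψ)
    (ψ : ℝ → ℝ) (hψ1 : Integrable ψ) (hψ2 : MemLp ψ 2)
    (hb1 : ∀ ξ : ℝ, ‖∫ x : ℝ, Complex.exp (Complex.I * x * ξ) * (ψ x : ℂ)‖ ≤ cψ)
    (hb2 : ∀ ξ : ℝ,
      ξ ∉ Set.Icc (-(8 * π / 3)) (-(2 * π / 3)) ∪ Set.Icc (2 * π / 3) (8 * π / 3) →
        (∫ x : ℝ, Complex.exp (Complex.I * x * ξ) * (ψ x : ℂ)) = 0)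
    (j : ℕ) (S : Finset ℤ) (b : ℤ → ℝ) (hb : ∀ k, |b k| ≤ 1)
    (fε : ℝ → ℝ) (hfε : fε = Set.indicator (Set.Icc (-a) a) fun _ => 1 / (2 * a))
    (θ : ℝ → ℝ)
    (hθ : ∀ x : ℝ, θ x =
      ∑ k ∈ S, b k * ∫ u, fε u * ((2 : ℝ) ^ ((j : ℝ) / 2) * ψ (2 ^ j * (x - u) - (k : ℝ)))) :
    (∫ ξ : ℝ, ‖∫ x : ℝ, Complex.exp (Complex.I * x * ξ) * (θ x : ℂ)‖ ^ 2)
      ≤ 6 * π * cψ ^ 2 * S.card * min 1 (((a * 2 ^ j) ^ 2)⁻¹) := by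
  have hn0 : (0:ℝ) < (2:ℝ)^j := by positivity
  set nn : ℝ := (2:ℝ)^j with hnn
  set sc : ℝ := (2:ℝ)^((j:ℝ)/2) with hsc
  have hsc0 : 0 < sc := Real.rpow_pos_of_pos (by norm_num) _
  set ψjk : ℤ → ℝ → ℝ := fun k y => sc * ψ (nn * y - k) with hψjkdef
  set Fψ : ℝ → ℂ := fun ξ => ∫ x : ℝ, Complex.exp (Complex.I * x * ξ) * (ψ x : ℂ) with hFψ
  set Ff : ℝ → ℂ := fun ξ => ∫ x : ℝ, Complex.exp (Complex.I * x * ξ) * (fε x : ℂ) with hFf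
  set P : ℝ → ℂ := fun t => ∑ k ∈ S, (b k : ℂ) * Complex.exp (Complex.I * k * t) with hP
  -- integrability facts
  have hfεi : Integrable fε := by
    rw [hfε]
    exact (integrable_indicator_iff measurableSet_Icc).2
      (integrableOn_const measure_Icc_lt_top.ne)
  have hψjki : ∀ k : ℤ, Integrable (ψjk k) := by
    intro k
    have h1 : Integrable (fun y : ℝ => ψ (y - k)) := hψ1.comp_sub_right (k:ℝ)
    have h2 := h1.comp_mul_left' (R := nn) (by positivity)
    have h3 : Integrable (fun y : ℝ => ψ (nn * y - k)) := by simpa using h2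
    simpa [hψjkdef] using h3.const_mul sc
  have hbase : ∀ k : ℤ, Integrable (fun p : ℝ × ℝ =>
      (fε p.2 : ℂ) * (ψjk k (p.1 - p.2) : ℂ)) (volume.prod volume) := by
    intro k
    have := (hfεi.ofReal (𝕜 := ℂ)).convolution_integrand (ContinuousLinearMap.mul ℝ ℂ)
      ((hψjki k).ofReal (𝕜 := ℂ))
    exact this
  have hexpm : ∀ ξ : ℝ, AEStronglyMeasurable (fun p : ℝ × ℝ =>
      Complex.exp (Complex.I * p.1 * ξ)) (volume.prod volume) :=
    fun ξ => (Complex.continuous_exp.comp (by continuity)).aestronglyMeasurable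
  have hprod : ∀ (k : ℤ) (ξ : ℝ), Integrable (fun p : ℝ × ℝ =>
      Complex.exp (Complex.I * p.1 * ξ) * ((fε p.2 : ℂ) * (ψjk k (p.1 - p.2) : ℂ)))
      (volume.prod volume) :=
    fun k ξ => Integrable.bdd_mul (c := 1) (hbase k) (hexpm ξ) (Filter.Eventually.of_forall fun p => le_of_eq (normexp p.1 ξ))
  have hDint : ∀ (k : ℤ) (ξ : ℝ), Integrable (fun x : ℝ =>
      Complex.exp (Complex.I * x * ξ) * ∫ u : ℝ, (fε u : ℂ) * (ψjk k (x - u) : ℂ)) := by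
    intro k ξ
    refine Integrable.bdd_mul ((hbase k).integral_prod_left)
      ((Complex.continuous_exp.comp (by continuity)).aestronglyMeasurable)
      (c := 1) (Filter.Eventually.of_forall fun x => le_of_eq (normexp x ξ))
  -- factorization of the Fourier transform of θ
  have keyθ : ∀ ξ : ℝ, (∫ x : ℝ, Complex.exp (Complex.I * x * ξ) * (θ x : ℂ))
      = Ff ξ * ((sc * nn⁻¹ : ℝ) : ℂ) * Fψ (ξ / nn) * P (ξ / nn) := by
    intro ξ
    have hnnC : (nn : ℂ) ≠ 0 := by exact_mod_cast hn0.ne'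
    have h1 : ∀ x : ℝ, Complex.exp (Complex.I * x * ξ) * (θ x : ℂ)
        = ∑ k ∈ S, (b k : ℂ) * (Complex.exp (Complex.I * x * ξ)
            * ∫ u : ℝ, (fε u : ℂ) * (ψjk k (x - u) : ℂ)) := by
      intro x
      rw [hθ x]
      push_cast
      rw [Finset.mul_sum]
      refine Finset.sum_congr rfl fun k _ => ?_
      rw [show ((∫ u : ℝ, fε u * (sc * ψ (nn * (x - u) - k)) : ℝ) : ℂ)
          = ∫ u : ℝ, ((fε u * (sc * ψ (nn * (x - u) - k)) : ℝ) : ℂ) from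
        (integral_ofReal (𝕜 := ℂ)).symm]
      have : ∀ u : ℝ, ((fε u * (sc * ψ (nn * (x - u) - k)) : ℝ) : ℂ)
          = (fε u : ℂ) * (ψjk k (x - u) : ℂ) := by
        intro u
        rw [hψjkdef]
        push_cast
        ring
      rw [integral_congr_ae (Filter.Eventually.of_forall this)]
      ring
    rw [integral_congr_ae (Filter.Eventually.of_forall h1),
      integral_finset_sum S (fun k _ => ((hDint k ξ).const_mul _))]
    have h2 : ∀ k ∈ S, (∫ x : ℝ, (b k : ℂ) * (Complex.exp (Complex.I * x * ξ)
        * ∫ u : ℝ, (fε u : ℂ) * (ψjk k (x - u) : ℂ)))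
        = (b k : ℂ) * (Ff ξ * ((sc * nn⁻¹ : ℝ) : ℂ)
            * (Fψ (ξ / nn) * Complex.exp (Complex.I * k * ((ξ / nn : ℝ))))) := by
      intro k _
      rw [integral_const_mul]
      congr 1
      have e1 : ∀ x : ℝ, Complex.exp (Complex.I * x * ξ) *
          (∫ u : ℝ, (fε u : ℂ) * (ψjk k (x - u) : ℂ))
          = ∫ u : ℝ, Complex.exp (Complex.I * x * ξ) * ((fε u : ℂ) * (ψjk k (x - u) : ℂ)) :=
        fun x => (integral_const_mul _ _).symm
      rw [integral_congr_ae (Filter.Eventually.of_forall e1),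
        integral_integral_swap (by exact hprod k ξ)]
      have e2 : ∀ u : ℝ, (∫ x : ℝ, Complex.exp (Complex.I * x * ξ)
            * ((fε u : ℂ) * (ψjk k (x - u) : ℂ)))
          = (Complex.exp (Complex.I * u * ξ) * (fε u : ℂ)) *
            (∫ y : ℝ, Complex.exp (Complex.I * y * ξ) * (ψjk k y : ℂ)) := by
        intro u
        have hpt2 : ∀ x : ℝ, Complex.exp (Complex.I * x * ξ) * ((fε u : ℂ) * (ψjk k (x - u) : ℂ))
            = (Complex.exp (Complex.I * u * ξ) * (fε u : ℂ)) *
              (Complex.exp (Complex.I * ((x - u : ℝ)) * ξ) * (ψjk k (x - u) : ℂ)) := by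
          intro x
          have hsplit : Complex.exp (Complex.I * x * ξ)
              = Complex.exp (Complex.I * u * ξ) * Complex.exp (Complex.I * ((x - u : ℝ)) * ξ) := by
            rw [← Complex.exp_add]
            congr 1
            push_cast
            ring
          rw [hsplit]; ring
        rw [integral_congr_ae (Filter.Eventually.of_forall hpt2), integral_const_mul,
          integral_sub_right_eq_self
            (fun y : ℝ => Complex.exp (Complex.I * y * ξ) * (ψjk k y : ℂ)) u]
      rw [integral_congr_ae (Filter.Eventually.of_forall e2), integral_mul_const]
      have escale : (∫ y : ℝ, Complex.exp (Complex.I * y * ξ) * (ψjk k y : ℂ))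
          = ((sc * nn⁻¹ : ℝ) : ℂ) * (Fψ (ξ / nn) * Complex.exp (Complex.I * k * ((ξ / nn : ℝ)))) := by
        set G : ℝ → ℂ := fun z => (sc : ℂ) *
          (Complex.exp (Complex.I * ((z + k)/nn : ℝ) * ξ) * (ψ z : ℂ)) with hG
        have ha1 : ∀ y : ℝ, Complex.exp (Complex.I * y * ξ) * (ψjk k y : ℂ) = G (nn * y - k) := by
          intro y
          have harg : ((nn * y - k) + k)/nn = y := by field_simp; ring
          rw [hG]
          simp only [harg, hψjkdef]
          push_cast
          ring
        rw [integral_congr_ae (Filter.Eventually.of_forall ha1)]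
        have ha2 : (∫ y : ℝ, G (nn * y - k)) = ∫ y : ℝ, (fun z => G (z - k)) (nn * y) :=
          integral_congr_ae (Filter.Eventually.of_forall fun y => rfl)
        rw [ha2, MeasureTheory.Measure.integral_comp_mul_left (fun z => G (z - k)) nn,
          integral_sub_right_eq_self G (k : ℝ)]
        have ha3 : ∀ z : ℝ, G z = ((sc : ℂ) * Complex.exp (Complex.I * k * ((ξ/nn : ℝ)))) *
            (Complex.exp (Complex.I * z * ((ξ/nn : ℝ))) * (ψ z : ℂ)) := by
          intro z
          simp only [hG]
          have : Complex.exp (Complex.I * ((z + k)/nn : ℝ) * ξ)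
              = Complex.exp (Complex.I * k * ((ξ/nn : ℝ))) *
                Complex.exp (Complex.I * z * ((ξ/nn : ℝ))) := by
            rw [← Complex.exp_add]
            congr 1
            push_cast
            field_simp
            ring
          rw [this]
          ring
        rw [integral_congr_ae (Filter.Eventually.of_forall ha3), integral_const_mul,
          abs_of_pos (inv_pos.2 hn0), hFψ]
        push_cast
        rw [Complex.real_smul]
        push_cast
        ring
      rw [escale, hFf]
      ring
    rw [Finset.sum_congr rfl h2, hP]
    rw [Finset.mul_sum]
    refine Finset.sum_congr rfl fun k _ => ?_
    push_cast
    ring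
  -- geometry of the bands
  set T : Set ℝ := Set.Icc (-(8*π/3) * nn) (-(2*π/3) * nn) ∪
      Set.Icc ((2*π/3) * nn) ((8*π/3) * nn) with hT
  have hTmeas : MeasurableSet T := (measurableSet_Icc).union measurableSet_Icc
  set m : ℝ := min 1 (a * nn)⁻¹ with hm
  have hm0 : (0:ℝ) ≤ m := le_min one_pos.le (by positivity)
  have hππ : (2:ℝ) ≤ 2*π/3 := by nlinarith [Real.pi_gt_three]
  have hFfT : ∀ ξ ∈ T, ‖Ff ξ‖ ≤ m := by
    intro ξ hξ
    have h1 : (2*π/3) * nn ≤ |ξ| := by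
      rcases hξ with h | h
      · have h2 := h.2
        have h3 : ξ ≤ 0 := le_trans h2 (by nlinarith)
        rw [abs_of_nonpos h3]; linarith
      · have h2 := h.1
        rw [abs_of_nonneg (le_trans (by nlinarith) h2)]; exact h2
    have hξ0 : ξ ≠ 0 := by
      intro h0
      rw [h0, abs_zero] at h1
      nlinarith
    have hone : ‖Ff ξ‖ ≤ 1 := by
      rw [hFf, hfε]; simpa using ff_one a ha ξ
    have hinv : ‖Ff ξ‖ ≤ 1/(a*|ξ|) := by
      rw [hFf, hfε]; simpa using ff_inv a ha ξ hξ0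
    refine le_min hone (hinv.trans ?_)
    rw [one_div]
    have hnξ : nn ≤ |ξ| := le_trans (by nlinarith) h1
    gcongr
  have hFψ0 : ∀ ξ : ℝ, ξ ∉ T → Fψ (ξ / nn) = 0 := by
    intro ξ hξ
    refine hb2 (ξ/nn) fun hmem => hξ ?_
    rcases hmem with h | h
    · left
      refine ⟨?_, ?_⟩
      · have h' := h.1
        rw [le_div_iff₀ hn0] at h'
        linarith
      · have h' := h.2
        rw [div_le_iff₀ hn0] at h'
        linarith
    · right
      refine ⟨?_, ?_⟩
      · have h' := h.1
        rw [le_div_iff₀ hn0] at h'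
        linarith
      · have h' := h.2
        rw [div_le_iff₀ hn0] at h'
        linarith
  set K : ℝ := m^2 * (sc*nn⁻¹)^2 * cψ^2 with hK
  have hpt : ∀ ξ : ℝ, ‖∫ x : ℝ, Complex.exp (Complex.I * x * ξ) * (θ x : ℂ)‖^2
      ≤ T.indicator (fun ξ => K * ‖P (ξ/nn)‖^2) ξ := by
    intro ξ
    by_cases hξ : ξ ∈ T
    · rw [Set.indicator_of_mem hξ, keyθ ξ]
      have hnb : ‖Ff ξ * ((sc * nn⁻¹ : ℝ) : ℂ) * Fψ (ξ / nn) * P (ξ / nn)‖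
          ≤ m * (sc * nn⁻¹) * cψ * ‖P (ξ / nn)‖ := by
        rw [norm_mul, norm_mul, norm_mul]
        have e1 : ‖((sc * nn⁻¹ : ℝ) : ℂ)‖ = sc * nn⁻¹ := by
          rw [Complex.norm_real, Real.norm_eq_abs, abs_of_pos (by positivity)]
        rw [e1]
        gcongr
        · exact hFfT ξ hξ
        · rw [hFψ]; simpa using hb1 (ξ/nn)
      refine le_trans (pow_le_pow_left₀ (norm_nonneg _) hnb 2) (le_of_eq ?_)
      rw [hK]; ring
    · rw [Set.indicator_of_notMem hξ, keyθ ξ, hFψ0 ξ hξ]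
      simp
  have hPc : Continuous P := by
    rw [hP]
    exact continuous_finset_sum _ (fun k _ => continuous_const.mul
      (Complex.continuous_exp.comp (continuous_const.mul Complex.continuous_ofReal)))
  have hgc : Continuous (fun ξ : ℝ => K * ‖P (ξ/nn)‖^2) := by
    refine continuous_const.mul ?_
    exact ((hPc.comp (continuous_id.div_const nn)).norm.pow 2)
  have hBint : Integrable (T.indicator (fun ξ => K * ‖P (ξ/nn)‖^2)) := by
    rw [integrable_indicator_iff hTmeas]
    exact (hgc.continuousOn).integrableOn_compact (isCompact_Icc.union isCompact_Icc)
  refine (integral_mono_of_nonneg (Filter.Eventually.of_forall fun ξ => sq_nonneg _) hBint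
    (Filter.Eventually.of_forall hpt)).trans ?_
  -- compute the integral of the bound
  rw [integral_indicator hTmeas]
  have hdisj : Disjoint (Set.Icc (-(8*π/3) * nn) (-(2*π/3) * nn))
      (Set.Icc ((2*π/3) * nn) ((8*π/3) * nn)) := by
    apply Set.disjoint_left.2
    rintro x hx1 hx2
    have h1 := hx1.2
    have h2 := hx2.1
    nlinarith [Real.pi_pos]
  have hIOn : ∀ (l u : ℝ), IntegrableOn (fun ξ => K * ‖P (ξ/nn)‖^2) (Set.Icc l u) :=
    fun l u => hgc.continuousOn.integrableOn_compact isCompact_Icc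
  rw [hT, setIntegral_union hdisj measurableSet_Icc (hIOn _ _) (hIOn _ _)]
  have hband : ∀ t0 : ℝ, (∫ ξ in (t0*nn)..((t0+2*π)*nn), K * ‖P (ξ/nn)‖^2)
      = nn * (K * (2*π*∑ k ∈ S, (b k)^2)) := by
    intro t0
    rw [intervalIntegral.integral_comp_div (fun t => K * ‖P t‖^2) hn0.ne']
    rw [mul_div_cancel_right₀ t0 hn0.ne', mul_div_cancel_right₀ _ hn0.ne']
    rw [intervalIntegral.integral_const_mul, orth S b t0]
    rw [smul_eq_mul]
  have hb1' : (∫ ξ in Set.Icc (-(8*π/3) * nn) (-(2*π/3) * nn), K * ‖P (ξ/nn)‖^2)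
      = nn * (K * (2*π*∑ k ∈ S, (b k)^2)) := by
    have hlu : (-(8*π/3) * nn) ≤ (-(2*π/3) * nn) := by nlinarith [Real.pi_pos]
    rw [MeasureTheory.integral_Icc_eq_integral_Ioc,
      ← intervalIntegral.integral_of_le hlu]
    rw [show (-(2*π/3) * nn) = ((-(8*π/3)) + 2*π) * nn by ring]
    exact hband (-(8*π/3))
  have hb2' : (∫ ξ in Set.Icc ((2*π/3) * nn) ((8*π/3) * nn), K * ‖P (ξ/nn)‖^2)
      = nn * (K * (2*π*∑ k ∈ S, (b k)^2)) := by
    have hlu : ((2*π/3) * nn) ≤ ((8*π/3) * nn) := by nlinarith [Real.pi_pos]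
    rw [MeasureTheory.integral_Icc_eq_integral_Ioc,
      ← intervalIntegral.integral_of_le hlu]
    rw [show ((8*π/3) * nn) = ((2*π/3) + 2*π) * nn by ring]
    exact hband (2*π/3)
  rw [hb1', hb2']
  -- final arithmetic
  have hb2sum : ∑ k ∈ S, (b k)^2 ≤ (S.card : ℝ) := by
    calc ∑ k ∈ S, (b k)^2 ≤ ∑ k ∈ S, 1 :=
          Finset.sum_le_sum (fun k _ => by nlinarith [hb k, abs_nonneg (b k), le_abs_self (b k), neg_abs_le (b k)])
      _ = S.card := by simp
  have hsc2 : sc * sc = nn := by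
    rw [hsc, hnn, ← Real.rpow_add (by norm_num : (0:ℝ) < 2),
      show (j:ℝ)/2 + (j:ℝ)/2 = (j:ℝ) by ring, Real.rpow_natCast]
  have hnnK : nn * K = m^2 * cψ^2 := by
    rw [hK]
    have h1 : (sc*nn⁻¹)^2 * nn = 1 := by
      have h2 : sc^2 = nn := by rw [sq]; exact hsc2
      field_simp [h2]
      exact h2
    calc nn * (m^2 * (sc*nn⁻¹)^2 * cψ^2) = m^2 * cψ^2 * ((sc*nn⁻¹)^2 * nn) := by ring
      _ = m^2 * cψ^2 := by rw [h1, mul_one]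
  have hm2 : m^2 = min 1 (((a*nn)^2)⁻¹) := by
    have han0 : (0:ℝ) < a*nn := by positivity
    rcases le_total ((a*nn)⁻¹) 1 with h | h
    · rw [hm, min_eq_right h, min_eq_right, ← inv_pow]
      have h1 : 1 ≤ a*nn := by
        have h2 := mul_le_mul_of_nonneg_right h han0.le
        rwa [inv_mul_cancel₀ han0.ne', one_mul] at h2
      have h3 : (1:ℝ) ≤ (a*nn)^2 := by nlinarith
      calc ((a*nn)^2)⁻¹ ≤ 1⁻¹ := by gcongr
        _ = 1 := inv_one
    · rw [hm, min_eq_left h, one_pow, min_eq_left]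
      have h1 : a*nn ≤ 1 := by
        have h2 := mul_le_mul_of_nonneg_right h han0.le
        rwa [one_mul, inv_mul_cancel₀ han0.ne'] at h2
      have h3 : (a*nn)^2 ≤ 1 := by nlinarith
      calc (1:ℝ) = 1⁻¹ := inv_one.symm
        _ ≤ ((a*nn)^2)⁻¹ := by gcongr
  rw [← hm2]
  have hLHS : nn * (K * (2*π*∑ k ∈ S, (b k)^2)) + nn * (K * (2*π*∑ k ∈ S, (b k)^2))
      = m^2 * cψ^2 * (4*π*∑ k ∈ S, (b k)^2) := by
    calc nn * (K * (2*π*∑ k ∈ S, (b k)^2)) + nn * (K * (2*π*∑ k ∈ S, (b k)^2))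
        = (nn * K) * (4*π*∑ k ∈ S, (b k)^2) := by ring
      _ = m^2 * cψ^2 * (4*π*∑ k ∈ S, (b k)^2) := by rw [hnnK]
  rw [hLHS]
  have hnneg : (0:ℝ) ≤ m^2 * cψ^2 := by positivity
  have hfin := mul_le_mul_of_nonneg_left hb2sum hnneg
  nlinarith [Real.pi_pos, mul_nonneg hnneg (Nat.cast_nonneg S.card), hfin,
    mul_le_mul_of_nonneg_left hfin (by positivity : (0:ℝ) ≤ 4*π)]
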